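/- For every cardinal number α with α ≥ 1, there exists a commutative unital ring R such that the cardinality of the set of one-generated unital subrings of R equals α (equivalently, the unital compressed commuting graph of R is the complete graph with all loops on α vertices). -/

import Mathlib

open Cardinal

universe u

section Aux

open TrivSqZeroExt

variable {M : Type u} [AddCommGroup M]

noncomputable local instance moduleMopInt : Module ℤᵐᵒᵖ M :=
  Module.compHom M ((RingHom.id ℤ).fromOpposite mul_comm)

local instance isCentralScalarInt : IsCentralScalar ℤ M := ⟨fun _ _ => rfl⟩

/-- The subring `ℤ ⊕ ℤv` of the trivial square-zero extension `ℤ ⊕ M`. -/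
def Sv (v : M) : Subring (TrivSqZeroExt ℤ M) where
  carrier := {x | ∃ t : ℤ, x.snd = t • v}
  one_mem' := ⟨0, by simp⟩
  zero_mem' := ⟨0, by simp⟩
  add_mem' := by
    rintro x y ⟨t, hx⟩ ⟨s, hy⟩
    exact ⟨t + s, by simp [hx, hy, add_smul]⟩
  neg_mem' := by
    rintro x ⟨t, hx⟩
    exact ⟨-t, by simp [hx]⟩
  mul_mem' := by
    rintro x y ⟨t, hx⟩ ⟨s, hy⟩
    refine ⟨x.fst * s + y.fst * t, ?_⟩
    rw [snd_mul, op_smul_eq_smul, hx, hy, smul_smul, smul_smul, add_smul]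

theorem mem_Sv {v : M} {x : TrivSqZeroExt ℤ M} : x ∈ Sv v ↔ ∃ t : ℤ, x.snd = t • v := Iff.rfl

/-- Every one-generated unital subring of `ℤ ⊕ M` equals `ℤ ⊕ ℤv` where `v` is the
nilpotent part of the generator. -/
theorem closure_eq_Sv (a : TrivSqZeroExt ℤ M) : Subring.closure {a} = Sv a.snd := by
  apply le_antisymm
  · rw [Subring.closure_le]
    rintro x rfl
    exact ⟨1, (one_smul ℤ _).symm⟩
  · rintro x ⟨t, hx⟩
    have h1 : a ∈ Subring.closure {a} := Subring.subset_closure rfl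
    have h2 : inl a.fst ∈ Subring.closure {a} := by
      convert intCast_mem (Subring.closure {a}) a.fst using 1
      ext <;> simp
    have h3 : inl x.fst ∈ Subring.closure {a} := by
      convert intCast_mem (Subring.closure {a}) x.fst using 1
      ext <;> simp
    have h4 : inl x.fst + t • (a - inl a.fst) ∈ Subring.closure {a} :=
      add_mem h3 (zsmul_mem (sub_mem h1 h2) t)
    convert h4
    ext
    · simp
    · simp [hx]

theorem setT_eq :
    {S : Subring (TrivSqZeroExt ℤ M) | ∃ a, S = Subring.closure {a}} =
      Set.range (Sv (M := M)) := by
  ext S'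
  constructor
  · rintro ⟨a, rfl⟩
    exact ⟨a.snd, (closure_eq_Sv a).symm⟩
  · rintro ⟨v, rfl⟩
    exact ⟨inr v, by rw [closure_eq_Sv, snd_inr]⟩

theorem Sv_eq_iff {v w : M} : Sv v = Sv w ↔ (∃ t : ℤ, v = t • w) ∧ (∃ t : ℤ, w = t • v) := by
  constructor
  · intro h
    constructor
    · have : (inr v : TrivSqZeroExt ℤ M) ∈ Sv w := h ▸ ⟨1, by simp⟩
      simpa [mem_Sv] using this
    · have : (inr w : TrivSqZeroExt ℤ M) ∈ Sv v := h.symm ▸ ⟨1, by simp⟩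
      simpa [mem_Sv] using this
  · rintro ⟨⟨t, ht⟩, ⟨s, hs⟩⟩
    ext x
    constructor
    · rintro ⟨r, hr⟩
      exact ⟨r * t, by rw [hr, ht, smul_smul]⟩
    · rintro ⟨r, hr⟩
      exact ⟨r * s, by rw [hr, hs, smul_smul]⟩

theorem Sv_injective [Module (ZMod 2) M] : Function.Injective (Sv (M := M)) := by
  have h2 : ∀ c : ZMod 2, c = 0 ∨ c = 1 := by decide
  have key : ∀ (t : ℤ) (v : M), t • v = 0 ∨ t • v = v := by
    intro t v
    rw [← Int.cast_smul_eq_zsmul (ZMod 2)]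
    rcases h2 (t : ZMod 2) with h | h <;> rw [h] <;> simp
  intro v w h
  rw [Sv_eq_iff] at h
  obtain ⟨⟨t, ht⟩, ⟨s, hs⟩⟩ := h
  rcases key t w with h | h
  · rw [ht, h] at hs ⊢
    rw [hs]
    simp
  · rw [ht, h]

/-- The infinite case of the main theorem. -/
theorem infinite_case (α : Cardinal.{u}) (hα : ℵ₀ ≤ α) :
    ∃ (R : Type u) (_ : CommRing R),
      #{S : Subring R | ∃ a : R, S = Subring.closure {a}} = α := by
  set X := α.out with hX
  have hXinf : Infinite X := Cardinal.infinite_iff.mpr (by rwa [Cardinal.mk_out])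
  set M := X →₀ ULift.{u} (ZMod 2) with hM
  refine ⟨TrivSqZeroExt ℤ M, inferInstance, ?_⟩
  rw [show {S : Subring (TrivSqZeroExt ℤ M) | ∃ a, S = Subring.closure {a}} =
    Set.range (Sv (M := M)) from setT_eq]
  rw [Cardinal.mk_range_eq _ Sv_injective]
  rw [hM, Cardinal.mk_finsupp_of_infinite]
  have : #(ULift.{u} (ZMod 2)) = 2 := by simp
  rw [this, Cardinal.mk_out]
  exact sup_eq_left.mpr ((le_trans (by exact Cardinal.nat_lt_aleph0 2 |>.le) hα))

/-! ### Number-theoretic facts about `ZMod (2^k)` -/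

lemma zsmul_crit {m : ℕ} {v w : ZMod m} : (∃ t : ℤ, v = t • w) ↔ w ∣ v := by
  constructor
  · rintro ⟨t, rfl⟩
    rw [zsmul_eq_mul]
    exact Dvd.intro_left _ rfl
  · rintro ⟨c, rfl⟩
    obtain ⟨t, rfl⟩ := ZMod.intCast_surjective (n := m) c
    exact ⟨t, by rw [zsmul_eq_mul, mul_comm]⟩

lemma pow_dvd_pow_zmod {k i j : ℕ} (hj : j ≤ k)
    (h : (2 : ZMod (2^k))^i ∣ (2:ZMod (2^k))^j) : i ≤ j ∨ j = k := by
  by_contra hcon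
  push_neg at hcon
  obtain ⟨h1, h2⟩ := hcon
  have hjk : j < k := lt_of_le_of_ne hj h2
  obtain ⟨c, hc⟩ := h
  obtain ⟨t, rfl⟩ := ZMod.intCast_surjective (n := 2^k) c
  have h0 : ((2^j - 2^i * t : ℤ) : ZMod (2^k)) = 0 := by push_cast; rw [hc]; ring
  rw [ZMod.intCast_zmod_eq_zero_iff_dvd] at h0
  have hd : (2:ℤ)^(j+1) ∣ 2^j := by
    have d1 : (2:ℤ)^(j+1) ∣ 2^j - 2^i * t := by
      refine dvd_trans ?_ h0
      push_cast
      exact pow_dvd_pow 2 hjk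
    have d2 : (2:ℤ)^(j+1) ∣ 2^i * t := Dvd.dvd.mul_right (pow_dvd_pow 2 h1) t
    have := dvd_add d1 d2
    simpa using this
  have hle := Int.le_of_dvd (by positivity) hd
  have : (2:ℤ)^j < 2^(j+1) := by
    apply pow_lt_pow_right₀ (by norm_num) (by omega)
  omega

lemma exists_pow_rep (k : ℕ) (v : ZMod (2^k)) :
    ∃ j : Fin (k+1), ((2 : ZMod (2^k))^(j:ℕ) ∣ v ∧ v ∣ (2:ZMod (2^k))^(j:ℕ)) := by
  haveI : NeZero (2^k) := ⟨pow_ne_zero k two_ne_zero⟩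
  by_cases hv : v = 0
  · refine ⟨⟨k, by omega⟩, ?_⟩
    have h2k : (2 : ZMod (2^k))^k = 0 := by
      have := ZMod.natCast_self (2^k)
      push_cast at this
      simpa using this
    simp [hv, h2k]
  · set K := v.val with hK
    have hKne : K ≠ 0 := fun h => hv (by rwa [← ZMod.val_eq_zero])
    have hKlt : K < 2^k := ZMod.val_lt v
    set j := K.factorization 2 with hj
    have hdvd : 2^j ∣ K := Nat.ordProj_dvd K 2
    have hodd : ¬ 2 ∣ (K / 2^j) := Nat.not_dvd_ordCompl Nat.prime_two hKne
    have hmul : 2^j * (K / 2^j) = K := Nat.ordProj_mul_ordCompl_eq_self K 2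
    have hjlt : j < k := by
      have h1 : 2^j ≤ K := Nat.le_of_dvd (Nat.pos_of_ne_zero hKne) hdvd
      have := lt_of_le_of_lt h1 hKlt
      exact (pow_lt_pow_iff_right₀ (by norm_num)).mp this
    have hcast : (K : ZMod (2^k)) = (2:ZMod (2^k))^j * ((K/2^j : ℕ) : ZMod (2^k)) := by
      conv_lhs => rw [← hmul]
      push_cast
      ring
    have hveq : v = (2:ZMod (2^k))^j * ((K / 2^j : ℕ) : ZMod (2^k)) := by
      rw [hK, ZMod.natCast_val, ZMod.cast_id] at hcast
      exact hcast
    refine ⟨⟨j, by omega⟩, ?_, ?_⟩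
    · simp only [Fin.val_mk]
      rw [hveq]
      exact Dvd.intro _ rfl
    · have hcop : Nat.Coprime (K / 2^j) (2^k) :=
        Nat.Coprime.pow_right k
          (Nat.coprime_comm.mp ((Nat.Prime.coprime_iff_not_dvd Nat.prime_two).mpr hodd))
      have hu : IsUnit ((K / 2^j : ℕ) : ZMod (2^k)) := (ZMod.isUnit_iff_coprime _ _).mpr hcop
      simp only [Fin.val_mk]
      rw [hveq]
      exact (associated_mul_unit_left _ _ hu).dvd

lemma up_smul_iff {m : ℕ} (v w : ZMod m) (t : ℤ) :
    (ULift.up.{u} v = t • ULift.up w) ↔ v = t • w := by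
  constructor
  · intro h
    have := congrArg ULift.down h
    simpa using this
  · intro h
    ext
    simpa using h

lemma Sv_up_eq_iff {m : ℕ} {v w : ZMod m} :
    Sv (ULift.up.{u} v) = Sv (ULift.up w) ↔ (w ∣ v ∧ v ∣ w) := by
  rw [Sv_eq_iff]
  simp only [up_smul_iff]
  rw [zsmul_crit, zsmul_crit]

/-- The finite case of the main theorem. -/
theorem finite_case (n : ℕ) (hn : 1 ≤ n) :
    ∃ (R : Type u) (_ : CommRing R),
      #{S : Subring R | ∃ a : R, S = Subring.closure {a}} = (n : Cardinal.{u}) := by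
  set k := n - 1 with hk
  set M := ULift.{u} (ZMod (2^k)) with hM
  refine ⟨TrivSqZeroExt ℤ M, inferInstance, ?_⟩
  rw [show {S : Subring (TrivSqZeroExt ℤ M) | ∃ a, S = Subring.closure {a}} =
    Set.range (Sv (M := M)) from setT_eq]
  have hkn : k + 1 = n := by omega
  let f : Fin (k+1) → Set.range (Sv (M := M)) :=
    fun j => ⟨Sv (ULift.up ((2 : ZMod (2^k))^(j:ℕ))), ⟨_, rfl⟩⟩
  have hinj : Function.Injective f := by
    intro i j hij
    have h : Sv (ULift.up.{u} ((2:ZMod (2^k))^(i:ℕ))) = Sv (ULift.up ((2:ZMod (2^k))^(j:ℕ))) :=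
      congrArg Subtype.val hij
    rw [Sv_up_eq_iff] at h
    obtain ⟨h1, h2⟩ := h
    have hi := pow_dvd_pow_zmod (Nat.lt_succ_iff.mp j.isLt) h2
    have hj := pow_dvd_pow_zmod (Nat.lt_succ_iff.mp i.isLt) h1
    have := i.isLt
    have := j.isLt
    ext
    omega
  have hsurj : Function.Surjective f := by
    rintro ⟨S', v, rfl⟩
    obtain ⟨j, hj1, hj2⟩ := exists_pow_rep k v.down
    refine ⟨j, ?_⟩
    apply Subtype.ext
    show Sv (ULift.up _) = Sv v
    have : v = ULift.up v.down := rfl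
    rw [this, Sv_up_eq_iff]
    exact ⟨hj2, hj1⟩
  have e : Fin (k+1) ≃ Set.range (Sv (M := M)) := Equiv.ofBijective f ⟨hinj, hsurj⟩
  have hmk : #(Set.range (Sv (M := M))) = #(ULift.{u} (Fin (k+1))) :=
    Cardinal.mk_congr ((Equiv.ulift).trans e).symm
  rw [hmk]
  simp [hkn]

end Aux

/-- For every cardinal `α ≥ 1` there exists a commutative unital ring whose number of
one-generated unital subrings equals `α`. -/
theorem stmt_11 (α : Cardinal.{u}) (hα : 1 ≤ α) :
    ∃ (R : Type u) (_ : CommRing R),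
      #{S : Subring R | ∃ a : R, S = Subring.closure {a}} = α := by
  rcases lt_or_ge α ℵ₀ with h | h
  · obtain ⟨n, rfl⟩ := Cardinal.lt_aleph0.mp h
    have hn : 1 ≤ n := by
      by_contra hcon
      push_neg at hcon
      interval_cases n
      · simp at hα
    exact finite_case n hn
  · exact infinite_case α h
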